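/- For any square quaternionic matrix P, the determinant of its complex representation χ(P) is a nonnegative real number. -/

import Mathlib

noncomputable section
open Matrix Polynomial

abbrev Hq := Quaternion ℝ

def toH (z : ℂ) : Hq := ⟨z.re, z.im, 0, 0⟩

def toC1 (q : Hq) : ℂ := ⟨q.re, q.imI⟩
def toC2 (q : Hq) : ℂ := ⟨q.imJ, q.imK⟩

def chi {m : ℕ} (P : Matrix (Fin m) (Fin m) Hq) :
    Matrix (Fin m ⊕ Fin m) (Fin m ⊕ Fin m) ℂ :=
  Matrix.fromBlocks (P.map toC1) (P.map toC2)
    (-(P.map fun q => star (toC2 q))) (P.map fun q => star (toC1 q))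


namespace NcT

open Matrix Sum

variable {n p : Type*} {R : Type*} [Ring R] [DecidableEq n] [DecidableEq p]

/-- Transvection over a (possibly noncommutative) ring. -/
def tv (i j : n) (c : R) : Matrix n n R :=
  1 + Matrix.single i j c

@[simp]
theorem tv_zero (i j : n) : tv i j (0 : R) = 1 := by simp [tv]

section
variable [Fintype n]

theorem tv_mul_tv_same {i j : n} (h : i ≠ j) (c d : R) :
    tv i j c * tv i j d = tv i j (c + d) := by
  simp [tv, Matrix.add_mul, Matrix.mul_add, h, h.symm, single_add]
  abel

@[simp]
theorem tv_mul_apply_same (i j b : n) (c : R) (M : Matrix n n R) :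
    (tv i j c * M) i b = M i b + c * M j b := by simp [tv, Matrix.add_mul]

@[simp]
theorem mul_tv_apply_same (i j a : n) (c : R) (M : Matrix n n R) :
    (M * tv i j c) a j = M a j + M a i * c := by simp [tv, Matrix.mul_add]

@[simp]
theorem tv_mul_apply_of_ne (i j a b : n) (ha : a ≠ i) (c : R) (M : Matrix n n R) :
    (tv i j c * M) a b = M a b := by simp [tv, Matrix.add_mul, ha]

@[simp]
theorem mul_tv_apply_of_ne (i j a b : n) (hb : b ≠ j) (c : R) (M : Matrix n n R) :
    (M * tv i j c) a b = M a b := by simp [tv, Matrix.mul_add, hb]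

end

variable (n R) in
/-- Data of a transvection. -/
structure TS where
  (i j : n)
  hij : i ≠ j
  c : R

namespace TS

/-- The matrix of a transvection datum. -/
def toMatrix (t : TS n R) : Matrix n n R :=
  tv t.i t.j t.c

@[simp]
theorem toMatrix_mk (i j : n) (hij : i ≠ j) (c : R) :
    TS.toMatrix ⟨i, j, hij, c⟩ = tv i j c :=
  rfl

/-- inverse datum -/
protected def inv (t : TS n R) : TS n R where
  i := t.i
  j := t.j
  hij := t.hij
  c := -t.c

section
variable [Fintype n]

theorem inv_mul (t : TS n R) : t.inv.toMatrix * t.toMatrix = 1 := by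
  rcases t with ⟨_, _, t_hij⟩
  simp [toMatrix, TS.inv, tv_mul_tv_same t_hij]

theorem mul_inv (t : TS n R) : t.toMatrix * t.inv.toMatrix = 1 := by
  rcases t with ⟨_, _, t_hij⟩
  simp [toMatrix, TS.inv, tv_mul_tv_same t_hij]

theorem reverse_inv_prod_mul_prod (L : List (TS n R)) :
    (L.reverse.map (toMatrix ∘ TS.inv)).prod * (L.map toMatrix).prod = 1 := by
  induction' L with t L IH
  · simp
  · suffices
      (L.reverse.map (toMatrix ∘ TS.inv)).prod * (t.inv.toMatrix * t.toMatrix) *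
          (L.map toMatrix).prod = 1
      by simpa [Matrix.mul_assoc]
    simpa [inv_mul] using IH

theorem prod_mul_reverse_inv_prod (L : List (TS n R)) :
    (L.map toMatrix).prod * (L.reverse.map (toMatrix ∘ TS.inv)).prod = 1 := by
  induction' L with t L IH
  · simp
  · suffices
      t.toMatrix *
            ((L.map toMatrix).prod * (L.reverse.map (toMatrix ∘ TS.inv)).prod) *
          t.inv.toMatrix = 1
      by simpa [Matrix.mul_assoc]
    simp_rw [IH, Matrix.mul_one, t.mul_inv]

end

variable (p) in
/-- Moving a transvection to a sum type. -/
def sumInl (t : TS n R) : TS (n ⊕ p) R where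
  i := inl t.i
  j := inl t.j
  hij := by simp [t.hij]
  c := t.c

theorem toMatrix_sumInl (t : TS n R) :
    (t.sumInl p).toMatrix = fromBlocks t.toMatrix 0 0 1 := by
  cases t
  ext a b
  cases' a with a a <;> cases' b with b b
  · by_cases h : a = b <;> simp [TS.sumInl, toMatrix, tv, h, single]
  · simp [TS.sumInl, toMatrix, tv, single]
  · simp [TS.sumInl, toMatrix, tv, single]
  · by_cases h : a = b <;> simp [TS.sumInl, toMatrix, tv, h, single]

@[simp]
theorem sumInl_toMatrix_prod_mul [Fintype n] [Fintype p] (M : Matrix n n R)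
    (L : List (TS n R)) (N : Matrix p p R) :
    (L.map (toMatrix ∘ sumInl p)).prod * fromBlocks M 0 0 N =
      fromBlocks ((L.map toMatrix).prod * M) 0 0 N := by
  induction' L with t L IH
  · simp
  · simp [Matrix.mul_assoc, IH, toMatrix_sumInl, fromBlocks_multiply]

@[simp]
theorem mul_sumInl_toMatrix_prod [Fintype n] [Fintype p] (M : Matrix n n R)
    (L : List (TS n R)) (N : Matrix p p R) :
    fromBlocks M 0 0 N * (L.map (toMatrix ∘ sumInl p)).prod =
      fromBlocks (M * (L.map toMatrix).prod) 0 0 N := by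
  induction' L with t L IH generalizing M N
  · simp
  · simp [IH, toMatrix_sumInl, fromBlocks_multiply]

/-- Reindexing a transvection. -/
def reindexEquiv (e : n ≃ p) (t : TS n R) : TS p R where
  i := e t.i
  j := e t.j
  hij := by simp [t.hij]
  c := t.c

variable [Fintype n] [Fintype p]

theorem toMatrix_reindexEquiv (e : n ≃ p) (t : TS n R) :
    (t.reindexEquiv e).toMatrix = reindexAlgEquiv ℕ R e t.toMatrix := by
  rcases t with ⟨t_i, t_j, _⟩
  ext a b
  simp only [reindexEquiv, tv, toMatrix_mk,
    submatrix_apply, reindex_apply, Matrix.add_apply, reindexAlgEquiv_apply]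
  by_cases ha : e t_i = a <;> by_cases hb : e t_j = b <;> by_cases hab : a = b <;>
    simp [ha, hb, hab, ← e.apply_eq_iff_eq_symm_apply, single, Matrix.one_apply,
      e.symm.injective.eq_iff]

theorem toMatrix_reindexEquiv_prod (e : n ≃ p) (L : List (TS n R)) :
    (L.map (toMatrix ∘ reindexEquiv e)).prod = reindexAlgEquiv ℕ R e (L.map toMatrix).prod := by
  induction' L with t L IH
  · simp
  · simp only [toMatrix_reindexEquiv, IH, Function.comp_apply, List.prod_cons,
      reindexAlgEquiv_apply, List.map]
    exact (reindexAlgEquiv_mul ℕ R _ _ _).symm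

end TS

end NcT

namespace Pivot

open Matrix Sum Unit Fin NcT NcT.TS

variable {𝕜 : Type*} [DivisionRing 𝕜] {r : ℕ} (M : Matrix (Fin r ⊕ Unit) (Fin r ⊕ Unit) 𝕜)

/-- Left multiplications clearing the last column. -/
def listTransvecCol : List (Matrix (Fin r ⊕ Unit) (Fin r ⊕ Unit) 𝕜) :=
  List.ofFn fun i : Fin r =>
    tv (inl i) (inr unit) <| -M (inl i) (inr unit) * (M (inr unit) (inr unit))⁻¹

/-- Right multiplications clearing the last row. -/
def listTransvecRow : List (Matrix (Fin r ⊕ Unit) (Fin r ⊕ Unit) 𝕜) :=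
  List.ofFn fun i : Fin r =>
    tv (inr unit) (inl i) <| -(M (inr unit) (inr unit))⁻¹ * M (inr unit) (inl i)

@[simp]
theorem length_listTransvecCol : (listTransvecCol M).length = r := by simp [listTransvecCol]

@[simp]
theorem length_listTransvecRow : (listTransvecRow M).length = r := by simp [listTransvecRow]

/-- Multiplying by some of the matrices in `listTransvecCol M` does not change the last row. -/
theorem listTransvecCol_mul_last_row_drop (i : Fin r ⊕ Unit) {k : ℕ} (hk : k ≤ r) :
    (((listTransvecCol M).drop k).prod * M) (inr unit) i = M (inr unit) i := by
  induction hk using Nat.decreasingInduction with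
  | of_succ n hn IH =>
    have hn' : n < (listTransvecCol M).length := by simpa [listTransvecCol] using hn
    rw [List.drop_eq_getElem_cons hn']
    have A : (listTransvecCol M)[n] =
        tv (inl (⟨n, hn⟩ : Fin r)) (inr unit)
          (-M (inl ⟨n, hn⟩) (inr unit) * (M (inr unit) (inr unit))⁻¹) := by
      simp [listTransvecCol]
    rw [A, List.prod_cons, Matrix.mul_assoc]
    rw [tv_mul_apply_of_ne _ _ _ _ (by simp)]
    exact IH
  | self =>
    simp only [length_listTransvecCol, le_refl, List.drop_eq_nil_of_le, List.prod_nil,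
      Matrix.one_mul]

/-- Multiplying by all the matrices in `listTransvecCol M` does not change the last row. -/
theorem listTransvecCol_mul_last_row (i : Fin r ⊕ Unit) :
    ((listTransvecCol M).prod * M) (inr unit) i = M (inr unit) i := by
  simpa using listTransvecCol_mul_last_row_drop M i (Nat.zero_le _)

/-- Multiplying by all the matrices in `listTransvecCol M` kills all the coefficients in the
last column but the last one. -/
theorem listTransvecCol_mul_last_col (hM : M (inr unit) (inr unit) ≠ 0) (i : Fin r) :
    ((listTransvecCol M).prod * M) (inl i) (inr unit) = 0 := by
  suffices H :
    ∀ k : ℕ,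
      k ≤ r →
        (((listTransvecCol M).drop k).prod * M) (inl i) (inr unit) =
          if k ≤ i then 0 else M (inl i) (inr unit) by
    simpa only [List.drop, _root_.zero_le, ite_true] using H 0 (Nat.zero_le _)
  intro k hk
  induction hk using Nat.decreasingInduction with
  | of_succ n hn IH =>
    have hn' : n < (listTransvecCol M).length := by simpa [listTransvecCol] using hn
    let n' : Fin r := ⟨n, hn⟩
    rw [List.drop_eq_getElem_cons hn']
    have A :
      (listTransvecCol M)[n] =
        tv (inl n') (inr unit) (-M (inl n') (inr unit) * (M (inr unit) (inr unit))⁻¹) := by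
      simp [listTransvecCol, n']
    simp only [Matrix.mul_assoc, A, List.prod_cons]
    by_cases h : n' = i
    · have hni : n = i := by
        cases i
        simp only [n', Fin.mk_eq_mk] at h
        simp [h]
      simp only [h, tv_mul_apply_same, IH, ← hni, add_le_iff_nonpos_right,
          listTransvecCol_mul_last_row_drop _ _ hn]
      simp [neg_mul, mul_assoc, inv_mul_cancel₀ hM, hM]
    · have hni : n ≠ i := by
        rintro rfl
        cases i
        simp [n'] at h
      simp only [ne_eq, inl.injEq, Ne.symm h, not_false_eq_true, tv_mul_apply_of_ne]
      rw [IH]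
      rcases le_or_gt (n + 1) i with (hi | hi)
      · simp only [hi, n.le_succ.trans hi, if_true]
      · rw [if_neg, if_neg]
        · simpa only [hni.symm, not_le, or_false] using Nat.lt_succ_iff_lt_or_eq.1 hi
        · simpa only [not_le] using hi
  | self =>
    simp only [length_listTransvecCol, le_refl, List.drop_eq_nil_of_le, List.prod_nil,
      Matrix.one_mul]
    rw [if_neg]
    simpa only [not_le] using i.2

/-- Multiplying by some of the matrices in `listTransvecRow M` does not change the last column. -/
theorem mul_listTransvecRow_last_col_take (i : Fin r ⊕ Unit) {k : ℕ} (hk : k ≤ r) :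
    (M * ((listTransvecRow M).take k).prod) i (inr unit) = M i (inr unit) := by
  induction' k with k IH
  · simp only [Matrix.mul_one, List.take_zero, List.prod_nil, List.take, Matrix.mul_one]
  · have hkr : k < r := hk
    let k' : Fin r := ⟨k, hkr⟩
    have :
      (listTransvecRow M)[k]? =
        ↑(tv (inr Unit.unit) (inl k')
            (-(M (inr Unit.unit) (inr Unit.unit))⁻¹ * M (inr Unit.unit) (inl k'))) := by
      simp only [listTransvecRow, List.ofFnNthVal, hkr, dif_pos, List.getElem?_ofFn, k']
    simp only [List.take_succ, ← Matrix.mul_assoc, this, List.prod_append, Matrix.mul_one,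
      List.prod_cons, List.prod_nil, Option.toList_some]
    rw [mul_tv_apply_of_ne, IH hkr.le]
    simp only [Ne, not_false_iff, reduceCtorEq]

/-- Multiplying by all the matrices in `listTransvecRow M` does not change the last column. -/
theorem mul_listTransvecRow_last_col (i : Fin r ⊕ Unit) :
    (M * (listTransvecRow M).prod) i (inr unit) = M i (inr unit) := by
  have A : (listTransvecRow M).length = r := by simp [listTransvecRow]
  rw [show listTransvecRow M = (listTransvecRow M).take (listTransvecRow M).length from
      List.take_length.symm, A]
  simpa using mul_listTransvecRow_last_col_take M i le_rfl

/-- Multiplying by all the matrices in `listTransvecRow M` kills all the coefficients in the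
last row but the last one. -/
theorem mul_listTransvecRow_last_row (hM : M (inr unit) (inr unit) ≠ 0) (i : Fin r) :
    (M * (listTransvecRow M).prod) (inr unit) (inl i) = 0 := by
  suffices H :
    ∀ k : ℕ,
      k ≤ r →
        (M * ((listTransvecRow M).take k).prod) (inr unit) (inl i) =
          if k ≤ i then M (inr unit) (inl i) else 0 by
    have A : (listTransvecRow M).length = r := by simp [listTransvecRow]
    rw [show listTransvecRow M = (listTransvecRow M).take (listTransvecRow M).length from
      List.take_length.symm, A]
    have : ¬r ≤ i := by simp
    simpa only [this, ite_eq_right_iff, if_false] using H r le_rfl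
  intro k hk
  induction' k with n IH
  · simp only [if_true, Matrix.mul_one, List.take_zero, zero_le', List.prod_nil]
  · have hnr : n < r := hk
    let n' : Fin r := ⟨n, hnr⟩
    have A :
      (listTransvecRow M)[n]? =
        ↑(tv (inr unit) (inl n')
        (-(M (inr unit) (inr unit))⁻¹ * M (inr unit) (inl n'))) := by
      simp only [listTransvecRow, List.ofFnNthVal, hnr, dif_pos, List.getElem?_ofFn, n']
    simp only [List.take_succ, A, ← Matrix.mul_assoc, List.prod_append, Matrix.mul_one,
      List.prod_cons, List.prod_nil, Option.toList_some]
    by_cases h : n' = i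
    · have hni : n = i := by
        cases i
        simp only [n', Fin.mk_eq_mk] at h
        simp only [h]
      have : ¬n.succ ≤ i := by simp only [← hni, n.lt_succ_self, not_le]
      simp only [h, mul_tv_apply_same, List.take, if_false,
        mul_listTransvecRow_last_col_take _ _ hnr.le, hni.le, this, if_true, IH hnr.le]
      simp [neg_mul, ← mul_assoc, mul_inv_cancel₀ hM, hM]
    · have hni : n ≠ i := by
        rintro rfl
        cases i
        tauto
      simp only [IH hnr.le, Ne, mul_tv_apply_of_ne, Ne.symm h, inl.injEq,
        not_false_eq_true]
      rcases le_or_gt (n + 1) i with (hi | hi)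
      · simp [hi, n.le_succ.trans hi, if_true]
      · rw [if_neg, if_neg]
        · simpa only [not_le] using hi
        · simpa only [hni.symm, not_le, or_false] using Nat.lt_succ_iff_lt_or_eq.1 hi

/-- Multiplying on both sides kills all the coefficients in the last row but the last one. -/
theorem listTransvecCol_mul_mul_listTransvecRow_last_col (hM : M (inr unit) (inr unit) ≠ 0)
    (i : Fin r) :
    ((listTransvecCol M).prod * M * (listTransvecRow M).prod) (inr unit) (inl i) = 0 := by
  have : listTransvecRow M = listTransvecRow ((listTransvecCol M).prod * M) := by
    simp [listTransvecRow, listTransvecCol_mul_last_row]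
  rw [this]
  apply mul_listTransvecRow_last_row
  simpa [listTransvecCol_mul_last_row] using hM

/-- Multiplying on both sides kills all the coefficients in the last column but the last one. -/
theorem listTransvecCol_mul_mul_listTransvecRow_last_row (hM : M (inr unit) (inr unit) ≠ 0)
    (i : Fin r) :
    ((listTransvecCol M).prod * M * (listTransvecRow M).prod) (inl i) (inr unit) = 0 := by
  have : listTransvecCol M = listTransvecCol (M * (listTransvecRow M).prod) := by
    simp [listTransvecCol, mul_listTransvecRow_last_col]
  rw [this, Matrix.mul_assoc]
  apply listTransvecCol_mul_last_col
  simpa [mul_listTransvecRow_last_col] using hM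

/-- Block-diagonalization. -/
theorem isTwoBlockDiagonal_listTransvecCol_mul_mul_listTransvecRow
    (hM : M (inr unit) (inr unit) ≠ 0) :
    IsTwoBlockDiagonal ((listTransvecCol M).prod * M * (listTransvecRow M).prod) := by
  constructor
  · ext i j
    have : j = unit := by simp only [eq_iff_true_of_subsingleton]
    simp [toBlocks₁₂, this, listTransvecCol_mul_mul_listTransvecRow_last_row M hM]
  · ext i j
    have : i = unit := by simp only [eq_iff_true_of_subsingleton]
    simp [toBlocks₂₁, this, listTransvecCol_mul_mul_listTransvecRow_last_col M hM]

theorem exists_isTwoBlockDiagonal_of_ne_zero (hM : M (inr unit) (inr unit) ≠ 0) :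
    ∃ L L' : List (NcT.TS (Fin r ⊕ Unit) 𝕜),
      IsTwoBlockDiagonal ((L.map toMatrix).prod * M * (L'.map toMatrix).prod) := by
  let L : List (NcT.TS (Fin r ⊕ Unit) 𝕜) :=
    List.ofFn fun i : Fin r =>
      ⟨inl i, inr unit, by simp, -M (inl i) (inr unit) * (M (inr unit) (inr unit))⁻¹⟩
  let L' : List (NcT.TS (Fin r ⊕ Unit) 𝕜) :=
    List.ofFn fun i : Fin r =>
      ⟨inr unit, inl i, by simp, -(M (inr unit) (inr unit))⁻¹ * M (inr unit) (inl i)⟩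
  refine ⟨L, L', ?_⟩
  have A : L.map toMatrix = listTransvecCol M := by simp [L, listTransvecCol, Function.comp_def]
  have B : L'.map toMatrix = listTransvecRow M := by simp [L', listTransvecRow, Function.comp_def]
  rw [A, B]
  exact isTwoBlockDiagonal_listTransvecCol_mul_mul_listTransvecRow M hM

theorem exists_isTwoBlockDiagonal_list_transvec_mul_mul_list_transvec
    (M : Matrix (Fin r ⊕ Unit) (Fin r ⊕ Unit) 𝕜) :
    ∃ L L' : List (NcT.TS (Fin r ⊕ Unit) 𝕜),
      IsTwoBlockDiagonal ((L.map toMatrix).prod * M * (L'.map toMatrix).prod) := by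
  by_cases H : IsTwoBlockDiagonal M
  · refine ⟨List.nil, List.nil, by simpa using H⟩
  by_cases hM : M (inr unit) (inr unit) ≠ 0
  · exact exists_isTwoBlockDiagonal_of_ne_zero M hM
  push_neg at hM
  simp only [not_and_or, IsTwoBlockDiagonal, toBlocks₁₂, toBlocks₂₁, ← Matrix.ext_iff] at H
  have : ∃ i : Fin r, M (inl i) (inr unit) ≠ 0 ∨ M (inr unit) (inl i) ≠ 0 := by
    cases' H with H H
    · contrapose! H
      rintro i ⟨⟩
      exact (H i).1
    · contrapose! H
      rintro ⟨⟩ j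
      exact (H j).2
  rcases this with ⟨i, h | h⟩
  · let M' := tv (inr Unit.unit) (inl i) 1 * M
    have hM' : M' (inr unit) (inr unit) ≠ 0 := by simpa [M', hM]
    rcases exists_isTwoBlockDiagonal_of_ne_zero M' hM' with ⟨L, L', hLL'⟩
    rw [Matrix.mul_assoc] at hLL'
    refine ⟨L ++ [⟨inr unit, inl i, by simp, 1⟩], L', ?_⟩
    simp only [List.map_append, List.prod_append, Matrix.mul_one, toMatrix_mk, List.prod_cons,
      List.prod_nil, List.map, Matrix.mul_assoc (L.map toMatrix).prod]
    exact hLL'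
  · let M' := M * tv (inl i) (inr unit) 1
    have hM' : M' (inr unit) (inr unit) ≠ 0 := by simpa [M', hM]
    rcases exists_isTwoBlockDiagonal_of_ne_zero M' hM' with ⟨L, L', hLL'⟩
    refine ⟨L, ⟨inl i, inr unit, by simp, 1⟩::L', ?_⟩
    simp only [← Matrix.mul_assoc, toMatrix_mk, List.prod_cons, List.map]
    rw [Matrix.mul_assoc (L.map toMatrix).prod]
    exact hLL'

theorem exists_list_transvec_mul_mul_list_transvec_eq_diagonal_induction
    (IH :
      ∀ M : Matrix (Fin r) (Fin r) 𝕜,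
        ∃ (L₀ L₀' : List (NcT.TS (Fin r) 𝕜)) (D₀ : Fin r → 𝕜),
          (L₀.map toMatrix).prod * M * (L₀'.map toMatrix).prod = diagonal D₀)
    (M : Matrix (Fin r ⊕ Unit) (Fin r ⊕ Unit) 𝕜) :
    ∃ (L L' : List (NcT.TS (Fin r ⊕ Unit) 𝕜)) (D : Fin r ⊕ Unit → 𝕜),
      (L.map toMatrix).prod * M * (L'.map toMatrix).prod = diagonal D := by
  rcases exists_isTwoBlockDiagonal_list_transvec_mul_mul_list_transvec M with ⟨L₁, L₁', hM⟩
  let M' := (L₁.map toMatrix).prod * M * (L₁'.map toMatrix).prod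
  let M'' := toBlocks₁₁ M'
  rcases IH M'' with ⟨L₀, L₀', D₀, h₀⟩
  set c := M' (inr unit) (inr unit)
  refine
    ⟨L₀.map (sumInl Unit) ++ L₁, L₁' ++ L₀'.map (sumInl Unit),
      Sum.elim D₀ fun _ => M' (inr unit) (inr unit), ?_⟩
  suffices (L₀.map (toMatrix ∘ sumInl Unit)).prod * M' * (L₀'.map (toMatrix ∘ sumInl Unit)).prod =
      diagonal (Sum.elim D₀ fun _ => c) by
    simpa [M', c, Matrix.mul_assoc]
  have : M' = fromBlocks M'' 0 0 (diagonal fun _ => c) := by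
    rw [← fromBlocks_toBlocks M', hM.1, hM.2]
    rfl
  rw [this]
  simp [h₀]

variable {n p : Type*} [DecidableEq n] [DecidableEq p] [Fintype n] [Fintype p]

theorem reindex_exists_list_transvec_mul_mul_list_transvec_eq_diagonal (M : Matrix p p 𝕜)
    (e : p ≃ n)
    (H :
      ∃ (L L' : List (NcT.TS n 𝕜)) (D : n → 𝕜),
        (L.map toMatrix).prod * Matrix.reindexAlgEquiv ℕ 𝕜 e M * (L'.map toMatrix).prod =
          diagonal D) :
    ∃ (L L' : List (NcT.TS p 𝕜)) (D : p → 𝕜),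
      (L.map toMatrix).prod * M * (L'.map toMatrix).prod = diagonal D := by
  rcases H with ⟨L₀, L₀', D₀, h₀⟩
  refine ⟨L₀.map (reindexEquiv e.symm), L₀'.map (reindexEquiv e.symm), D₀ ∘ e, ?_⟩
  have : M = reindexAlgEquiv ℕ 𝕜 e.symm (reindexAlgEquiv ℕ 𝕜 e M) := by
    simp only [Equiv.symm_symm, submatrix_submatrix, reindex_apply, submatrix_id_id,
      Equiv.symm_comp_self, reindexAlgEquiv_apply]
  rw [this]
  simp only [toMatrix_reindexEquiv_prod, List.map_map, reindexAlgEquiv_apply]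
  simp only [← reindexAlgEquiv_apply ℕ, ← reindexAlgEquiv_mul, h₀]
  simp only [Equiv.symm_symm, reindex_apply, submatrix_diagonal_equiv, reindexAlgEquiv_apply]

theorem exists_list_transvec_mul_mul_list_transvec_eq_diagonal_aux (n : Type) [Fintype n]
    [DecidableEq n] (M : Matrix n n 𝕜) :
    ∃ (L L' : List (NcT.TS n 𝕜)) (D : n → 𝕜),
      (L.map toMatrix).prod * M * (L'.map toMatrix).prod = diagonal D := by
  induction' hn : Fintype.card n with r IH generalizing n M
  · refine ⟨List.nil, List.nil, fun _ => 1, ?_⟩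
    ext i j
    rw [Fintype.card_eq_zero_iff] at hn
    exact hn.elim' i
  · have e : n ≃ Fin r ⊕ Unit := by
      refine Fintype.equivOfCardEq ?_
      rw [hn]
      rw [@Fintype.card_sum (Fin r) Unit _ _]
      simp
    apply reindex_exists_list_transvec_mul_mul_list_transvec_eq_diagonal M e
    apply
      exists_list_transvec_mul_mul_list_transvec_eq_diagonal_induction fun N =>
        IH (Fin r) N (by simp)

theorem exists_list_transvec_mul_mul_list_transvec_eq_diagonal (M : Matrix n n 𝕜) :
    ∃ (L L' : List (NcT.TS n 𝕜)) (D : n → 𝕜),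
      (L.map toMatrix).prod * M * (L'.map toMatrix).prod = diagonal D := by
  have e : n ≃ Fin (Fintype.card n) := Fintype.equivOfCardEq (by simp)
  apply reindex_exists_list_transvec_mul_mul_list_transvec_eq_diagonal M e
  apply exists_list_transvec_mul_mul_list_transvec_eq_diagonal_aux

/-- Any matrix over a division ring can be written as transvections times diagonal times
transvections. -/
theorem exists_list_transvec_mul_diagonal_mul_list_transvec (M : Matrix n n 𝕜) :
    ∃ (L L' : List (NcT.TS n 𝕜)) (D : n → 𝕜),
      M = (L.map toMatrix).prod * diagonal D * (L'.map toMatrix).prod := by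
  rcases exists_list_transvec_mul_mul_list_transvec_eq_diagonal M with ⟨L, L', D, h⟩
  refine ⟨L.reverse.map NcT.TS.inv, L'.reverse.map NcT.TS.inv, D, ?_⟩
  suffices
    M =
      (L.reverse.map (toMatrix ∘ NcT.TS.inv)).prod * (L.map toMatrix).prod * M *
        ((L'.map toMatrix).prod * (L'.reverse.map (toMatrix ∘ NcT.TS.inv)).prod)
    by simpa [← h, Matrix.mul_assoc]
  rw [reverse_inv_prod_mul_prod, prod_mul_reverse_inv_prod, Matrix.one_mul, Matrix.mul_one]

end Pivot

namespace ChiAux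

@[simp] lemma toC1_zero : toC1 0 = 0 := rfl
@[simp] lemma toC2_zero : toC2 0 = 0 := rfl
@[simp] lemma toC1_one : toC1 1 = 1 := rfl
@[simp] lemma toC2_one : toC2 1 = 0 := by
  apply Complex.ext <;> simp [toC2, Quaternion.imJ_one, Quaternion.imK_one]

lemma toC1_add (p q : Hq) : toC1 (p + q) = toC1 p + toC1 q := by
  apply Complex.ext <;> simp [toC1]
lemma toC2_add (p q : Hq) : toC2 (p + q) = toC2 p + toC2 q := by
  apply Complex.ext <;> simp [toC2]

lemma toC1_mul (p q : Hq) : toC1 (p * q) = toC1 p * toC1 q - toC2 p * star (toC2 q) := by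
  apply Complex.ext <;>
    simp [toC1, toC2, Quaternion.re_mul, Quaternion.imI_mul, Complex.mul_re, Complex.mul_im] <;>
    ring

lemma toC2_mul (p q : Hq) : toC2 (p * q) = toC1 p * toC2 q + toC2 p * star (toC1 q) := by
  apply Complex.ext <;>
    simp [toC1, toC2, Quaternion.imJ_mul, Quaternion.imK_mul, Complex.mul_re, Complex.mul_im] <;>
    ring

def toC1Hom : Hq →+ ℂ := ⟨⟨toC1, rfl⟩, toC1_add⟩
def toC2Hom : Hq →+ ℂ := ⟨⟨toC2, rfl⟩, toC2_add⟩

lemma toC1_sum {α : Type*} (s : Finset α) (f : α → Hq) :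
    toC1 (∑ x ∈ s, f x) = ∑ x ∈ s, toC1 (f x) := map_sum toC1Hom f s
lemma toC2_sum {α : Type*} (s : Finset α) (f : α → Hq) :
    toC2 (∑ x ∈ s, f x) = ∑ x ∈ s, toC2 (f x) := map_sum toC2Hom f s

variable {m : ℕ}

lemma chi_one : chi (1 : Matrix (Fin m) (Fin m) Hq) = 1 := by
  ext a b
  rcases a with i | i <;> rcases b with j | j <;> by_cases h : i = j <;>
    simp [chi, Matrix.one_apply, h]

lemma chi_mul (P Q : Matrix (Fin m) (Fin m) Hq) : chi (P * Q) = chi P * chi Q := by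
  ext a b
  cases a with
  | inl i => cases b with
    | inl j =>
      simp only [chi, fromBlocks_apply₁₁, Matrix.map_apply, Matrix.mul_apply,
        Fintype.sum_sum_type, fromBlocks_apply₁₂, fromBlocks_apply₂₁, fromBlocks_apply₂₂,
        Matrix.neg_apply, toC1_sum]
      rw [← Finset.sum_add_distrib]
      refine Finset.sum_congr rfl fun k _ => ?_
      rw [toC1_mul]; ring
    | inr j =>
      simp only [chi, fromBlocks_apply₁₁, Matrix.map_apply, Matrix.mul_apply,
        Fintype.sum_sum_type, fromBlocks_apply₁₂, fromBlocks_apply₂₁, fromBlocks_apply₂₂,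
        Matrix.neg_apply, toC2_sum]
      rw [← Finset.sum_add_distrib]
      refine Finset.sum_congr rfl fun k _ => ?_
      rw [toC2_mul]
  | inr i => cases b with
    | inl j =>
      simp only [chi, fromBlocks_apply₁₁, Matrix.map_apply, Matrix.mul_apply,
        Fintype.sum_sum_type, fromBlocks_apply₁₂, fromBlocks_apply₂₁, fromBlocks_apply₂₂,
        Matrix.neg_apply, toC2_sum]
      rw [star_sum, ← Finset.sum_neg_distrib, ← Finset.sum_add_distrib]
      refine Finset.sum_congr rfl fun k _ => ?_
      rw [toC2_mul, star_add, star_mul', star_mul']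
      simp only [star_star]
      ring
    | inr j =>
      simp only [chi, fromBlocks_apply₁₁, Matrix.map_apply, Matrix.mul_apply,
        Fintype.sum_sum_type, fromBlocks_apply₁₂, fromBlocks_apply₂₁, fromBlocks_apply₂₂,
        Matrix.neg_apply, toC1_sum]
      rw [star_sum, ← Finset.sum_add_distrib]
      refine Finset.sum_congr rfl fun k _ => ?_
      rw [toC1_mul, star_sub, star_mul', star_mul']
      simp only [star_star]
      ring

end ChiAux

namespace ChiAux

open NcT Sum

variable {m : ℕ}

lemma chi_add (P Q : Matrix (Fin m) (Fin m) Hq) : chi (P + Q) = chi P + chi Q := by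
  ext a b
  rcases a with i | i <;> rcases b with j | j <;>
    simp [chi, toC1_add, toC2_add, star_add, neg_add, add_comm]

lemma chi_stdBasisMatrix (i j : Fin m) (c : Hq) :
    chi (single i j c) =
      single (inl i) (inl j) (toC1 c) + single (inl i) (inr j) (toC2 c) +
        (single (inr i) (inl j) (-star (toC2 c)) +
          single (inr i) (inr j) (star (toC1 c))) := by
  ext a b
  rcases a with a | a <;> rcases b with b | b <;>
    by_cases h1 : i = a <;> by_cases h2 : j = b <;>
      simp [chi, single, h1, h2]

lemma det_chi_tv (i j : Fin m) (h : i ≠ j) (c : Hq) : (chi (tv i j c)).det = 1 := by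
  have hil : (inl i : Fin m ⊕ Fin m) ≠ inl j := by simp [h]
  have hir : (inl i : Fin m ⊕ Fin m) ≠ inr j := by simp
  have hrl : (inr i : Fin m ⊕ Fin m) ≠ inl j := by simp
  have hrr : (inr i : Fin m ⊕ Fin m) ≠ inr j := by simp [h]
  set A := single (inl i : Fin m ⊕ Fin m) (inl j : Fin m ⊕ Fin m) (toC1 c) with hA
  set B := single (inl i : Fin m ⊕ Fin m) (inr j : Fin m ⊕ Fin m) (toC2 c) with hB
  set C := single (inr i : Fin m ⊕ Fin m) (inl j : Fin m ⊕ Fin m) (-star (toC2 c))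
    with hC
  set D := single (inr i : Fin m ⊕ Fin m) (inr j : Fin m ⊕ Fin m) (star (toC1 c))
    with hD
  have expand : ∀ X Y : Matrix (Fin m ⊕ Fin m) (Fin m ⊕ Fin m) ℂ,
      X * Y = 0 → (1 + X) * (1 + Y) = 1 + (X + Y) := by
    intro X Y hXY
    rw [Matrix.mul_add, Matrix.add_mul, Matrix.add_mul, hXY]
    noncomm_ring
  have zAB : A * B = 0 := by
    rw [hA, hB]; exact Matrix.single_mul_single_of_ne (h := by simp [h.symm]) ..
  have zCD : C * D = 0 := by
    rw [hC, hD]; exact Matrix.single_mul_single_of_ne (h := by simp [h.symm]) ..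
  have zAC : A * C = 0 := by
    rw [hA, hC]; exact Matrix.single_mul_single_of_ne (h := by simp) ..
  have zAD : A * D = 0 := by
    rw [hA, hD]; exact Matrix.single_mul_single_of_ne (h := by simp) ..
  have zBC : B * C = 0 := by
    rw [hB, hC]; exact Matrix.single_mul_single_of_ne (h := by simp [h.symm]) ..
  have zBD : B * D = 0 := by
    rw [hB, hD]; exact Matrix.single_mul_single_of_ne (h := by simp [h.symm]) ..
  have z2 : (A + B) * (C + D) = 0 := by
    rw [Matrix.add_mul, Matrix.mul_add, Matrix.mul_add, zAC, zAD, zBC, zBD]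
    simp
  have key : chi (tv i j c) = (1 + A) * (1 + B) * ((1 + C) * (1 + D)) := by
    rw [expand A B zAB, expand C D zCD, expand _ _ z2]
    rw [tv, chi_add, chi_one, chi_stdBasisMatrix]
  have dA : (1 + A).det = 1 := by
    rw [hA, ← Matrix.transvection]; exact Matrix.det_transvection_of_ne _ _ hil _
  have dB : (1 + B).det = 1 := by
    rw [hB, ← Matrix.transvection]; exact Matrix.det_transvection_of_ne _ _ hir _
  have dC : (1 + C).det = 1 := by
    rw [hC, ← Matrix.transvection]; exact Matrix.det_transvection_of_ne _ _ hrl _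
  have dD : (1 + D).det = 1 := by
    rw [hD, ← Matrix.transvection]; exact Matrix.det_transvection_of_ne _ _ hrr _
  rw [key, Matrix.det_mul, Matrix.det_mul, Matrix.det_mul, dA, dB, dC, dD]
  norm_num

lemma det_chi_diagonal (d : Fin m → Hq) :
    (chi (Matrix.diagonal d)).det =
      ((∏ i, (Complex.normSq (toC1 (d i)) + Complex.normSq (toC2 (d i))) : ℝ) : ℂ) := by
  classical
  let e : Fin 2 × Fin m ≃ Fin m ⊕ Fin m :=
    (finTwoEquiv.prodCongr (Equiv.refl (Fin m))).trans (Equiv.boolProdEquivSum (Fin m))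
  have hsub : (chi (Matrix.diagonal d)).submatrix e e =
      Matrix.blockDiagonal fun i : Fin m =>
        !![toC1 (d i), toC2 (d i); -star (toC2 (d i)), star (toC1 (d i))] := by
    ext ⟨a, i⟩ ⟨b, j⟩
    fin_cases a <;> fin_cases b <;>
      by_cases h : i = j <;>
        simp [e, Equiv.boolProdEquivSum, finTwoEquiv, chi, Matrix.diagonal,
          Matrix.blockDiagonal_apply, h, Matrix.one_apply]
  have := Matrix.det_submatrix_equiv_self e (chi (Matrix.diagonal d))
  rw [← this, hsub, Matrix.det_blockDiagonal]
  push_cast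
  refine Finset.prod_congr rfl fun i _ => ?_
  rw [Matrix.det_fin_two_of]
  rw [← Complex.mul_conj, ← Complex.mul_conj]
  simp only [Complex.star_def]
  ring

end ChiAux

open ChiAux in
/-- The determinant of the complex representation of a quaternionic matrix is a
nonnegative real number. -/
theorem chi_det_nonneg {m : ℕ} (P : Matrix (Fin m) (Fin m) Hq) :
    ∃ r : ℝ, 0 ≤ r ∧ (chi P).det = r := by
  obtain ⟨L, L', D, h⟩ := Pivot.exists_list_transvec_mul_diagonal_mul_list_transvec P
  have detL : ∀ L : List (NcT.TS (Fin m) Hq),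
      (chi (L.map NcT.TS.toMatrix).prod).det = 1 := by
    intro L
    induction L with
    | nil => simp [chi_one]
    | cons t L ih =>
      rw [List.map_cons, List.prod_cons, chi_mul, Matrix.det_mul, ih, mul_one]
      exact det_chi_tv t.i t.j t.hij t.c
  refine ⟨∏ i, (Complex.normSq (toC1 (D i)) + Complex.normSq (toC2 (D i))), ?_, ?_⟩
  · exact Finset.prod_nonneg fun i _ =>
      add_nonneg (Complex.normSq_nonneg _) (Complex.normSq_nonneg _)
  · rw [h, chi_mul, chi_mul, Matrix.det_mul, Matrix.det_mul, detL, detL,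
      det_chi_diagonal]
    ring
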